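/- For every positive integer l, the residue of (e^z + 1)^{−l} at the pole z = iπ equals −1 (independent of l). -/

import Mathlib

open Real

open Complex Metric in
/-- Nonvanishing of `exp z + 1` near `πI` (except at `πI`). -/
lemma aux_ne_zero {ε : ℝ} (hε' : ε < 2 * Real.pi) {z : ℂ}
    (hz : ‖z - Real.pi * Complex.I‖ ≤ ε) (hne : z ≠ Real.pi * Complex.I) :
    Complex.exp z + 1 ≠ 0 := by
  intro h
  have hexp : Complex.exp (z - Real.pi * Complex.I) = 1 := by
    rw [Complex.exp_sub, Complex.exp_pi_mul_I]
    have : Complex.exp z = -1 := by linear_combination h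
    rw [this]; norm_num
  obtain ⟨n, hn⟩ := Complex.exp_eq_one_iff.mp hexp
  have habs : ‖z - Real.pi * Complex.I‖ = |(n : ℝ)| * (2 * Real.pi) := by
    rw [hn, norm_mul, norm_mul, norm_mul]
    simp [abs_of_pos Real.pi_pos]
  have hn0 : n = 0 := by
    by_contra hn0
    have h1 : (1 : ℝ) ≤ |(n : ℝ)| := by
      have := Int.one_le_abs hn0
      rw [← Int.cast_abs]
      exact_mod_cast this
    have : 2 * Real.pi ≤ |(n : ℝ)| * (2 * Real.pi) := by
      nlinarith [Real.pi_pos]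
    rw [← habs] at this
    linarith [lt_of_le_of_lt hz hε']
  apply hne
  rw [hn0] at hn
  simpa [sub_eq_zero] using hn

open Complex Metric in
lemma aux_integral (l : ℕ) (hl : 0 < l) (ε : ℝ) (hε : 0 < ε) (hε' : ε < 2 * Real.pi) :
    (∮ z in C(Real.pi * Complex.I, ε), ((Complex.exp z + 1) ^ l)⁻¹)
      = -(2 * Real.pi * Complex.I) := by
  set c : ℂ := Real.pi * Complex.I with hc
  have hsp : ∀ z ∈ sphere c ε, Complex.exp z + 1 ≠ 0 := by
    intro z hz
    rw [mem_sphere_iff_norm] at hz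
    refine aux_ne_zero hε' (le_of_eq hz) ?_
    intro h
    rw [h] at hz
    simp [hc] at hz
    exact absurd hz.symm (ne_of_gt hε)
  induction l with
  | zero => omega
  | succ m ih =>
    rcases Nat.eq_zero_or_pos m with hm | hm
    · -- base case `l = 1`
      subst hm
      -- g = (dslope exp c)⁻¹, with g c = -1
      set g : ℂ → ℂ := fun z => (dslope Complex.exp c z)⁻¹ with hg
      have hcexp : Complex.exp c = -1 := Complex.exp_pi_mul_I
      have hds_ne : ∀ z ∈ closedBall c ε, dslope Complex.exp c z ≠ 0 := by
        intro z hz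
        rcases eq_or_ne z c with rfl | hzc
        · rw [dslope_same, Complex.deriv_exp, hcexp]
          norm_num
        · rw [dslope_of_ne _ hzc, slope_def_field]
          have h1 : Complex.exp z + 1 ≠ 0 := by
            refine aux_ne_zero hε' ?_ hzc
            rwa [mem_closedBall, dist_eq_norm] at hz
          have : Complex.exp z - Complex.exp c = Complex.exp z + 1 := by
            rw [hcexp]; ring
          rw [this]
          exact div_ne_zero h1 (sub_ne_zero.mpr hzc)
      have hds_diff : ∀ z ∈ closedBall c ε, DifferentiableAt ℂ (dslope Complex.exp c) z := by
        intro z _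
        rcases eq_or_ne z c with rfl | hzc
        · obtain ⟨p, hp⟩ := analyticAt_cexp (z := c)
          exact (HasFPowerSeriesAt.has_fpower_series_dslope_fslope hp).differentiableAt
        · have heq := dslope_eventuallyEq_slope_of_ne Complex.exp hzc
          rw [Filter.EventuallyEq.differentiableAt_iff heq]
          refine DifferentiableAt.smul (c := fun b => (b - c)⁻¹) (f := fun b => Complex.exp b - Complex.exp c) ?_ ?_
          · exact (differentiableAt_id.sub_const c).inv (sub_ne_zero.mpr hzc)
          · exact Complex.differentiable_exp.differentiableAt.sub_const _
      have hgdiff : ∀ z ∈ closedBall c ε, DifferentiableAt ℂ g z := fun z hz =>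
        (hds_diff z hz).inv (hds_ne z hz)
      have hdc : DiffContOnCl ℂ g (ball c ε) := by
        constructor
        · exact fun z hz => ((hgdiff z (ball_subset_closedBall hz)).differentiableWithinAt)
        · rw [closure_ball c (ne_of_gt hε)]
          exact fun z hz => (hgdiff z hz).continuousAt.continuousWithinAt
      have hcb : c ∈ ball c ε := mem_ball_self hε
      have hcauchy := hdc.circleIntegral_sub_inv_smul hcb
      have hgc : g c = -1 := by
        rw [hg]
        simp only [dslope_same, Complex.deriv_exp, hcexp]
        norm_num
      have heqon : Set.EqOn (fun z => ((Complex.exp z + 1) ^ 1)⁻¹)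
          (fun z => (z - c)⁻¹ • g z) (sphere c ε) := by
        intro z hz
        have hzc : z ≠ c := by
          intro h; rw [mem_sphere_iff_norm, h] at hz; simp at hz
          exact absurd hz.symm (ne_of_gt hε)
        have h1 : Complex.exp z + 1 ≠ 0 := hsp z hz
        simp only [hg, pow_one, smul_eq_mul]
        rw [dslope_of_ne _ hzc, slope_def_field]
        have : Complex.exp z - Complex.exp c = Complex.exp z + 1 := by
          rw [hcexp]; ring
        rw [this]
        field_simp
      rw [circleIntegral.integral_congr hε.le heqon, hcauchy, hgc]
      simp [hc]
    · -- inductive step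
      have ihm := ih hm
      have hcont : ∀ n : ℕ, ContinuousOn (fun z => ((Complex.exp z + 1) ^ n)⁻¹) (sphere c ε) := by
        intro n
        apply ContinuousOn.inv₀
        · exact ((Complex.continuous_exp.continuousOn.add continuousOn_const).pow n)
        · exact fun z hz => pow_ne_zero n (hsp z hz)
      have hint : ∀ n : ℕ, CircleIntegrable (fun z => ((Complex.exp z + 1) ^ n)⁻¹) c ε :=
        fun n => (hcont n).circleIntegrable hε.le
      have hder : ∀ z ∈ sphere c ε,
          HasDerivWithinAt (fun w => ((m : ℂ))⁻¹ * ((Complex.exp w + 1) ^ m)⁻¹)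
            (((Complex.exp z + 1) ^ (m + 1))⁻¹ - ((Complex.exp z + 1) ^ m)⁻¹)
            (sphere c ε) z := by
        intro z hz
        have hu : Complex.exp z + 1 ≠ 0 := hsp z hz
        have h1 : HasDerivAt (fun w => Complex.exp w + 1) (Complex.exp z) z :=
          (Complex.hasDerivAt_exp z).add_const 1
        have h2 := h1.pow m
        have h3 := h2.inv (pow_ne_zero m hu)
        have h4 := h3.const_mul ((m : ℂ))⁻¹
        have key : (m : ℂ)⁻¹ * (-(↑m * (Complex.exp z + 1) ^ (m - 1) * Complex.exp z) /
            ((Complex.exp z + 1) ^ m) ^ 2)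
            = ((Complex.exp z + 1) ^ (m + 1))⁻¹ - ((Complex.exp z + 1) ^ m)⁻¹ := by
          obtain ⟨k, rfl⟩ : ∃ k, m = k + 1 := ⟨m - 1, by omega⟩
          have hm0 : ((k : ℂ) + 1) ≠ 0 := Nat.cast_add_one_ne_zero k
          have hE : Complex.exp z = (Complex.exp z + 1) - 1 := by ring
          push_cast
          rw [hE]
          field_simp
          ring
        rw [← key]
        exact h4.hasDerivWithinAt
      have hzero : (∮ z in C(c, ε), (((Complex.exp z + 1) ^ (m + 1))⁻¹
          - ((Complex.exp z + 1) ^ m)⁻¹)) = 0 :=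
        circleIntegral.integral_eq_zero_of_hasDerivWithinAt hε.le hder
      have hsub := circleIntegral.integral_sub (hint (m + 1)) (hint m)
      rw [hsub] at hzero
      have : (∮ z in C(c, ε), ((Complex.exp z + 1) ^ (m + 1))⁻¹)
          = ∮ z in C(c, ε), ((Complex.exp z + 1) ^ m)⁻¹ := by
        linear_combination hzero
      rw [this, ihm]

theorem stmt_7 (l : ℕ) (hl : 0 < l) (ε : ℝ) (hε : 0 < ε) (hε' : ε < 2 * Real.pi) :
    (2 * Real.pi * Complex.I)⁻¹ *
        (∮ z in C(Real.pi * Complex.I, ε), ((Complex.exp z + 1) ^ l)⁻¹) = -1 := by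
  rw [aux_integral l hl ε hε hε']
  have h2pi : (2 * (Real.pi : ℂ) * Complex.I) ≠ 0 := by
    simp [Complex.I_ne_zero, Real.pi_ne_zero]
  field_simp
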